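/- arXiv:1906.08515 — 2 statements merged into one kernel-verified Lean document; each statement's English description precedes it below -/
import Mathlib

section
/- Let X be a finite set of integers each greater than 1. Then the number of connected components of the bipartite divisor graph B(X) equals the number of connected components of the prime graph Δ(X). Here B(X) has vertex set the disjoint union of X and the set of primes dividing some element of X, with a prime p adjacent to x ∈ X iff p divides x; Δ(X) has vertex set the primes dividing some element of X, with p adjacent to q (p ≠ q) iff pq divides some element of X. -/
open SimpleGraph

/-- Vertex type of the bipartite divisor graph of a set of naturals:
the disjoint union of `X` and of the primes dividing some element of `X`. -/
abbrev BDGVert (X : Set ℕ) : Type :=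
  {x : ℕ // x ∈ X} ⊕ {p : ℕ // p.Prime ∧ ∃ x ∈ X, p ∣ x}

/-- The bipartite divisor graph `B(X)`: a prime `p` is adjacent to `x ∈ X` iff `p ∣ x`. -/
def bdg (X : Set ℕ) : SimpleGraph (BDGVert X) :=
  SimpleGraph.fromRel (fun a b =>
    match a, b with
    | Sum.inr p, Sum.inl x => p.1 ∣ x.1
    | _, _ => False)

/-- The prime graph `Δ(X)`: primes `p ≠ q` are adjacent iff `pq` divides some element of `X`. -/
def primeGraph (X : Set ℕ) : SimpleGraph {p : ℕ // p.Prime ∧ ∃ x ∈ X, p ∣ x} :=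
  SimpleGraph.fromRel (fun p q => ∃ x ∈ X, p.1 * q.1 ∣ x)

/-- The common divisor graph `Γ(X)`: distinct `x, y ∈ X` are adjacent iff `gcd(x,y) ≠ 1`. -/
def cdGraph (X : Set ℕ) : SimpleGraph {x : ℕ // x ∈ X} :=
  SimpleGraph.fromRel (fun a b => Nat.gcd a.1 b.1 ≠ 1)

/-- The set of irreducible complex character degrees of a group `G`. -/
def charDegrees (G : Type) [Group G] : Set ℕ :=
  {n | ∃ V : FDRep ℂ G, CategoryTheory.Simple V ∧ Module.finrank ℂ V = n}

/-- Disjoint union of two simple graphs. -/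
def disjUnionGraph {α β : Type*} (G : SimpleGraph α) (H : SimpleGraph β) :
    SimpleGraph (α ⊕ β) where
  Adj a b :=
    match a, b with
    | Sum.inl x, Sum.inl y => G.Adj x y
    | Sum.inr x, Sum.inr y => H.Adj x y
    | _, _ => False
  symm := by
    constructor
    rintro (x | x) (y | y) h <;> simp_all <;> exact h.symm
  loopless := by
    constructor
    rintro (x | x) h <;> simp_all

section Aux

variable (X : Set ℕ)

lemma aux_adj_prime {p q : {p : ℕ // p.Prime ∧ ∃ x ∈ X, p ∣ x}} (hne : p ≠ q)
    {x : ℕ} (hx : x ∈ X) (hp : p.1 ∣ x) (hq : q.1 ∣ x) : (primeGraph X).Adj p q := by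
  refine ⟨hne, Or.inl ⟨x, hx, ?_⟩⟩
  exact Nat.Coprime.mul_dvd_of_dvd_of_dvd
    ((Nat.coprime_primes p.2.1 q.2.1).2 (fun h => hne (Subtype.ext h))) hp hq

lemma aux_reach_prime {p q : {p : ℕ // p.Prime ∧ ∃ x ∈ X, p ∣ x}}
    {x : ℕ} (hx : x ∈ X) (hp : p.1 ∣ x) (hq : q.1 ∣ x) : (primeGraph X).Reachable p q := by
  by_cases h : p = q
  · exact h ▸ Reachable.refl p
  · exact (aux_adj_prime X h hx hp hq).reachable

variable (h1 : ∀ x ∈ X, 1 < x)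

/-- map a vertex of the bipartite divisor graph to a component of the prime graph -/
noncomputable def auxPhi : BDGVert X → (primeGraph X).ConnectedComponent
  | Sum.inl x => (primeGraph X).connectedComponentMk
      ⟨x.1.minFac, Nat.minFac_prime (by have := h1 x.1 x.2; omega), x.1, x.2, Nat.minFac_dvd _⟩
  | Sum.inr p => (primeGraph X).connectedComponentMk p

lemma auxPhi_adj {a b : BDGVert X} (hab : (bdg X).Adj a b) :
    auxPhi X h1 a = auxPhi X h1 b := by
  obtain ⟨hne, h⟩ := hab
  rcases a with x | p <;> rcases b with y | q
  · exact absurd h (by simp)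
  · have hd : q.1 ∣ x.1 := by
      rcases h with h | h
      · exact h.elim
      · exact h
    exact (ConnectedComponent.sound
      (aux_reach_prime X x.2 hd (Nat.minFac_dvd _))).symm
  · have hd : p.1 ∣ y.1 := by
      rcases h with h | h
      · exact h
      · exact h.elim
    exact ConnectedComponent.sound
      (aux_reach_prime X y.2 hd (Nat.minFac_dvd _))
  · exact absurd h (by simp)

lemma auxPhi_reach {a b : BDGVert X} (hab : (bdg X).Reachable a b) :
    auxPhi X h1 a = auxPhi X h1 b := by
  obtain ⟨w⟩ := hab
  induction w with
  | nil => rfl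
  | cons hadj _ ih => exact (auxPhi_adj X h1 hadj).trans ih

lemma aux_reach_inr_step {u v : {p : ℕ // p.Prime ∧ ∃ x ∈ X, p ∣ x}}
    {x : ℕ} (hx : x ∈ X) (hd : u.1 * v.1 ∣ x) :
    (bdg X).Reachable (Sum.inr u) (Sum.inr v) := by
  have hu : u.1 ∣ x := (dvd_mul_right u.1 v.1).trans hd
  have hv : v.1 ∣ x := (dvd_mul_left v.1 u.1).trans hd
  have a1 : (bdg X).Adj (Sum.inr u) (Sum.inl ⟨x, hx⟩) := ⟨by simp, Or.inl hu⟩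
  have a2 : (bdg X).Adj (Sum.inl ⟨x, hx⟩) (Sum.inr v) := ⟨by simp, Or.inr hv⟩
  exact a1.reachable.trans a2.reachable

lemma aux_reach_inr {p q : {p : ℕ // p.Prime ∧ ∃ x ∈ X, p ∣ x}}
    (h : (primeGraph X).Reachable p q) :
    (bdg X).Reachable (Sum.inr p) (Sum.inr q) := by
  obtain ⟨w⟩ := h
  induction w with
  | nil => exact Reachable.refl _
  | @cons u v _ hadj _ ih =>
    refine Reachable.trans ?_ ih
    obtain ⟨hne, h | h⟩ := hadj
    · obtain ⟨x, hx, hd⟩ := h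
      exact aux_reach_inr_step X hx hd
    · obtain ⟨x, hx, hd⟩ := h
      exact aux_reach_inr_step X hx (mul_comm u.1 v.1 ▸ hd)

noncomputable def auxG : (bdg X).ConnectedComponent → (primeGraph X).ConnectedComponent :=
  Quot.lift (auxPhi X h1) (fun _ _ h => auxPhi_reach X h1 h)

noncomputable def auxF : (primeGraph X).ConnectedComponent → (bdg X).ConnectedComponent :=
  Quot.lift (fun p => (bdg X).connectedComponentMk (Sum.inr p))
    (fun _ _ h => ConnectedComponent.sound (aux_reach_inr X h))

end Aux

theorem stmt0 (X : Set ℕ) (hfin : X.Finite) (h1 : ∀ x ∈ X, 1 < x) :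
    Nat.card (bdg X).ConnectedComponent = Nat.card (primeGraph X).ConnectedComponent := by
  classical
  have hfg : Function.LeftInverse (auxF X) (auxG X h1) := by
    refine ConnectedComponent.ind (fun v => ?_)
    match v with
    | Sum.inr p => rfl
    | Sum.inl x =>
      exact ConnectedComponent.sound
        (Adj.reachable ⟨by simp, Or.inl (Nat.minFac_dvd _)⟩)
  have hgf : Function.RightInverse (auxF X) (auxG X h1) :=
    ConnectedComponent.ind (fun p => rfl)
  exact Nat.card_eq_of_bijective (auxG X h1)
    (Function.bijective_iff_has_inverse.mpr ⟨auxF X, hfg, hgf⟩)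
end

section
/- Let p, q, r be primes with q ≠ r such that neither q nor r divides p^{qr} − 1. If (p^{qr} − 1)/(p^r − 1) is a prime power, we have a contradiction; hence under these hypotheses (p^{qr} − 1)/(p^r − 1) is not a prime power. -/
open SimpleGraph

open Polynomial in
/-- If a prime `s` divides `Φₙ(a)` and `s ∤ n`, then `a` has order `n` mod `s`. -/
lemma aux_order_of_dvd_cyclotomic {s n : ℕ} (a : ℤ) (hs : s.Prime) (hn : n ≠ 0)
    (hdvd : (s : ℤ) ∣ (cyclotomic n ℤ).eval a) (hsn : ¬ s ∣ n) :
    n = orderOf ((a : ZMod s)) := by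
  haveI : Fact s.Prime := ⟨hs⟩
  haveI : NeZero ((n : ZMod s)) := ⟨by rwa [Ne, ZMod.natCast_eq_zero_iff]⟩
  have hroot : IsRoot (cyclotomic n (ZMod s)) ((a : ZMod s)) := by
    rw [← map_cyclotomic_int n (ZMod s), IsRoot.def, eval_intCast_map]
    simp only [Int.coe_castRingHom, Int.cast_id]
    rwa [ZMod.intCast_zmod_eq_zero_iff_dvd]
  rw [isRoot_cyclotomic_iff] at hroot
  exact hroot.eq_orderOf

open Polynomial in
theorem stmt10 (p q r : ℕ) (hp : p.Prime) (hq : q.Prime) (hr : r.Prime) (hqr : q ≠ r)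
    (h1 : ¬ q ∣ p ^ (q * r) - 1) (h2 : ¬ r ∣ p ^ (q * r) - 1) :
    ¬ ∃ s k : ℕ, s.Prime ∧ (p ^ (q * r) - 1) / (p ^ r - 1) = s ^ k := by
  rintro ⟨s, k, hsp, heq⟩
  set a : ℤ := (p : ℤ) with ha
  have hp2 : 2 ≤ p := hp.two_le
  have hq1 : 1 < q := hq.one_lt
  have hr1 : 1 < r := hr.one_lt
  have hqr0 : 0 < q * r := by positivity
  have hqr1 : 1 < q * r := by nlinarith
  -- divisibility of p^r - 1 into p^(qr) - 1
  have hdvd1 : p ^ r - 1 ∣ p ^ (q * r) - 1 := by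
    have := Nat.sub_dvd_pow_sub_pow (p ^ r) 1 q
    rwa [one_pow, ← pow_mul, mul_comm r q] at this
  have hNmul : (p ^ (q * r) - 1) / (p ^ r - 1) * (p ^ r - 1) = p ^ (q * r) - 1 :=
    Nat.div_mul_cancel hdvd1
  -- divisors of q*r
  have hdivqr : (q * r).divisors = {1, q, r, q * r} := by
    rw [Nat.divisors_mul, hq.divisors, hr.divisors]
    ext d
    simp only [Finset.mem_mul, Finset.mem_insert, Finset.mem_singleton]
    constructor
    · rintro ⟨x, hx, y, hy, rfl⟩
      rcases hx with rfl | rfl <;> rcases hy with rfl | rfl <;> simp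
    · rintro (h | h | h | h)
      · exact ⟨1, by simp, 1, by simp, by simp [h]⟩
      · exact ⟨q, by simp, 1, by simp, by simp [h]⟩
      · exact ⟨1, by simp, r, by simp, by simp [h]⟩
      · exact ⟨q, by simp, r, by simp, h.symm⟩
  -- distinctness facts
  have hqne : q ≠ q * r := by nlinarith
  have hrne : r ≠ q * r := by nlinarith
  have h1q : (1 : ℕ) ≠ q := hq1.ne
  have h1r : (1 : ℕ) ≠ r := hr1.ne
  have h1qr : (1 : ℕ) ≠ q * r := hqr1.ne
  -- products of cyclotomic evals
  have hprod_qr :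
      (cyclotomic 1 ℤ).eval a * ((cyclotomic q ℤ).eval a * ((cyclotomic r ℤ).eval a *
        (cyclotomic (q * r) ℤ).eval a)) = a ^ (q * r) - 1 := by
    have h := congrArg (eval a) (prod_cyclotomic_eq_X_pow_sub_one hqr0 ℤ)
    rw [eval_prod, hdivqr] at h
    rw [Finset.prod_insert (by simp [h1q, h1r, h1qr]),
      Finset.prod_insert (by simp [hqr, hqne]),
      Finset.prod_insert (by simp [hrne]), Finset.prod_singleton] at h
    simpa using h
  have hprod_r :
      (cyclotomic 1 ℤ).eval a * (cyclotomic r ℤ).eval a = a ^ r - 1 := by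
    have h := congrArg (eval a) (prod_cyclotomic_eq_X_pow_sub_one (by positivity : 0 < r) ℤ)
    rw [eval_prod, hr.divisors, Finset.prod_insert (by simp [h1r]),
      Finset.prod_singleton] at h
    simpa using h
  have hkey : ((cyclotomic q ℤ).eval a * (cyclotomic (q * r) ℤ).eval a) * (a ^ r - 1)
      = a ^ (q * r) - 1 := by
    rw [← hprod_r]; ring_nf; ring_nf at hprod_qr; linarith [hprod_qr]
  -- cast the natural-number equation
  have hone_le : 1 ≤ p ^ (q * r) := Nat.one_le_pow _ _ hp.pos
  have hone_le' : 1 ≤ p ^ r := Nat.one_le_pow _ _ hp.pos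
  have hcastqr : ((p ^ (q * r) - 1 : ℕ) : ℤ) = a ^ (q * r) - 1 := by
    push_cast [hone_le]; ring
  have hcastr : ((p ^ r - 1 : ℕ) : ℤ) = a ^ r - 1 := by
    push_cast [hone_le']; ring
  have hNcast : ((s : ℤ)) ^ k * (a ^ r - 1) = a ^ (q * r) - 1 := by
    have := congrArg (fun n : ℕ => (n : ℤ)) hNmul
    simp only [Nat.cast_mul, hcastqr, hcastr, heq] at this
    push_cast at this
    exact this
  have harne : (a ^ r - 1 : ℤ) ≠ 0 := by
    have : (2:ℤ) ≤ a := by rw [ha]; exact_mod_cast hp2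
    have : (1:ℤ) < a ^ r := one_lt_pow₀ (by omega) (by omega) 
    linarith
  have hfact : ((s : ℤ)) ^ k = (cyclotomic q ℤ).eval a * (cyclotomic (q * r) ℤ).eval a :=
    mul_right_cancel₀ harne (by rw [hNcast, hkey])
  -- natAbs version
  set A := ((cyclotomic q ℤ).eval a).natAbs with hA
  set B := ((cyclotomic (q * r) ℤ).eval a).natAbs with hB
  have hABs : A * B = s ^ k := by
    have := congrArg Int.natAbs hfact
    rwa [Int.natAbs_mul, Int.natAbs_pow, Int.natAbs_natCast, eq_comm] at this
  have hA1 : 1 < A := by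
    have h := sub_one_lt_natAbs_cyclotomic_eval hq1 (by omega : p ≠ 1)
    rw [← ha] at h
    omega
  have hB1 : 1 < B := by
    have h := sub_one_lt_natAbs_cyclotomic_eval hqr1 (by omega : p ≠ 1)
    rw [← ha] at h
    omega
  -- s divides both A and B
  have hsA : s ∣ A := by
    obtain ⟨j, hj, hAeq⟩ := (Nat.dvd_prime_pow hsp).mp (hABs ▸ dvd_mul_right A B)
    rcases Nat.eq_zero_or_pos j with rfl | hj0
    · simp at hAeq; omega
    · rw [hAeq]; exact dvd_pow_self s hj0.ne'
  have hsB : s ∣ B := by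
    obtain ⟨j, hj, hBeq⟩ := (Nat.dvd_prime_pow hsp).mp (hABs ▸ dvd_mul_left B A)
    rcases Nat.eq_zero_or_pos j with rfl | hj0
    · simp at hBeq; omega
    · rw [hBeq]; exact dvd_pow_self s hj0.ne'
  -- s ≠ q and s ≠ r
  have hk0 : k ≠ 0 := by
    rintro rfl
    rw [pow_zero] at hABs
    nlinarith
  have hsN : s ∣ p ^ (q * r) - 1 := by
    refine dvd_trans ?_ ⟨p ^ r - 1, hNmul.symm⟩
    rw [heq]
    exact dvd_pow_self s hk0
  have hsq : s ≠ q := by rintro rfl; exact h1 hsN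
  have hsr : s ≠ r := by rintro rfl; exact h2 hsN
  have hnsq : ¬ s ∣ q := fun h => hsq ((Nat.prime_dvd_prime_iff_eq hsp hq).mp h)
  have hnsqr : ¬ s ∣ q * r := by
    intro h
    rcases hsp.dvd_mul.mp h with h' | h'
    · exact hnsq h'
    · exact hsr ((Nat.prime_dvd_prime_iff_eq hsp hr).mp h')
  -- orders
  have hsdA : (s : ℤ) ∣ (cyclotomic q ℤ).eval a := by
    rw [← Int.natAbs_dvd_natAbs, Int.natAbs_natCast]; exact hsA
  have hsdB : (s : ℤ) ∣ (cyclotomic (q * r) ℤ).eval a := by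
    rw [← Int.natAbs_dvd_natAbs, Int.natAbs_natCast]; exact hsB
  have ho1 := aux_order_of_dvd_cyclotomic a hsp (by omega) hsdA hnsq
  have ho2 := aux_order_of_dvd_cyclotomic a hsp (by omega) hsdB hnsqr
  rw [← ho1] at ho2
  nlinarith
end
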